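/- Let A₁, …, A_m be Hermitian n×n matrices with n ≥ r, and define a₀ = inf { Σ_j ⟨x x* − y y*, A_j⟩_ℝ² / ‖x x* − y y*‖₂² : x, y ∈ ℂ^{n×r}, x x* ≠ y y* }. For z ∈ ℂ^{n×r} with z* z = I_r, let â(z) = min { Σ_j ⟨z w* + w z*, A_j⟩_ℝ² : w ∈ H_z, ‖w‖₂ = 1 }, where H_z is the orthogonal complement in ℂ^{n×r} of {z K : K skew-Hermitian}. Then (1/4) · inf { â(z) : z ∈ ℂ^{n×r}, z* z = I_r } ≤ a₀ ≤ (1/2) · inf { â(z) : z ∈ ℂ^{n×r}, z* z = I_r }. -/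

import Mathlib

open Matrix Filter
open scoped ComplexOrder

noncomputable def frob {p q : ℕ} (x : Matrix (Fin p) (Fin q) ℂ) : ℝ :=
  Real.sqrt (Matrix.trace (xᴴ * x)).re

noncomputable def rinner {p q : ℕ} (X Y : Matrix (Fin p) (Fin q) ℂ) : ℝ :=
  (Matrix.trace (Xᴴ * Y)).re

/-- The old Mathlib `Matrix.PosSemidef.sqrt` (removed since), with its old definition. -/
noncomputable def Matrix.PosSemidef.sqrt {n 𝕜 : Type*} [Fintype n] [RCLike 𝕜] [DecidableEq n]
    {A : Matrix n n 𝕜} (hA : Matrix.PosSemidef A) : Matrix n n 𝕜 :=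
  hA.1.eigenvectorUnitary.1 * Matrix.diagonal ((↑) ∘ (Real.sqrt ∘ hA.1.eigenvalues)) *
    (star hA.1.eigenvectorUnitary : Matrix n n 𝕜)

noncomputable def nuclear {p q : ℕ} (x : Matrix (Fin p) (Fin q) ℂ) : ℝ :=
  (Matrix.trace (Matrix.posSemidef_conjTranspose_mul_self x).sqrt).re

noncomputable def theta {n r : ℕ} (x : Matrix (Fin n) (Fin r) ℂ) : Matrix (Fin n) (Fin n) ℂ :=
  (Matrix.posSemidef_self_mul_conjTranspose x).sqrt

noncomputable def psi {n r : ℕ} (x : Matrix (Fin n) (Fin r) ℂ) : Matrix (Fin n) (Fin n) ℂ :=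
  frob x • theta x

noncomputable def Dmet {n r : ℕ} (x y : Matrix (Fin n) (Fin r) ℂ) : ℝ :=
  ⨅ U : Matrix.unitaryGroup (Fin r) ℂ, frob (x - y * (U : Matrix (Fin r) (Fin r) ℂ))

noncomputable def dmet {n r : ℕ} (x y : Matrix (Fin n) (Fin r) ℂ) : ℝ :=
  ⨅ U : Matrix.unitaryGroup (Fin r) ℂ,
    frob (x - y * (U : Matrix (Fin r) (Fin r) ℂ)) * frob (x + y * (U : Matrix (Fin r) (Fin r) ℂ))


/-- `â(z) = min {Σ_j ⟨z w* + w z*, A_j⟩_ℝ² : w ∈ H_z, ‖w‖₂ = 1}`, where `H_z` is the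
orthogonal complement in `(ℂ^{n×r}, ⟨·,·⟩_ℝ)` of the vertical space `{z K : K* = −K}`. -/
noncomputable def aHat {n r m : ℕ} (A : Fin m → Matrix (Fin n) (Fin n) ℂ)
    (z : Matrix (Fin n) (Fin r) ℂ) : ℝ :=
  sInf {t : ℝ | ∃ w : Matrix (Fin n) (Fin r) ℂ,
    (∀ K : Matrix (Fin r) (Fin r) ℂ, Kᴴ = -K →
      (Matrix.trace ((z * K)ᴴ * w)).re = 0) ∧
    frob w = 1 ∧ t = ∑ j, rinner (z * wᴴ + w * zᴴ) (A j) ^ 2}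

/-- The squared global lower Lipschitz constant `a₀` of the `β` analysis map. -/
noncomputable def aGlobal {n m : ℕ} (r : ℕ) (A : Fin m → Matrix (Fin n) (Fin n) ℂ) : ℝ :=
  sInf {t : ℝ | ∃ x y : Matrix (Fin n) (Fin r) ℂ, x * xᴴ ≠ y * yᴴ ∧
    t = (∑ j, rinner (x * xᴴ - y * yᴴ) (A j) ^ 2) / frob (x * xᴴ - y * yᴴ) ^ 2}

/-! ### Auxiliary lemmas -/

section Aux1
variable {p q : ℕ}

lemma rinner_self_eq_sum (M : Matrix (Fin p) (Fin q) ℂ) :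
    rinner M M = ∑ j, ∑ i, Complex.normSq (M i j) := by
  unfold rinner
  rw [Matrix.trace]
  simp only [Matrix.diag, Matrix.mul_apply, Matrix.conjTranspose_apply, Complex.re_sum]
  congr 1; ext j; congr 1; ext i
  simp [Complex.normSq, Complex.mul_re]

lemma rinner_self_nonneg (M : Matrix (Fin p) (Fin q) ℂ) : 0 ≤ rinner M M := by
  rw [rinner_self_eq_sum]
  exact Finset.sum_nonneg fun j _ => Finset.sum_nonneg fun i _ => Complex.normSq_nonneg _

lemma rinner_self_eq_zero {M : Matrix (Fin p) (Fin q) ℂ} (h : rinner M M = 0) : M = 0 := by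
  rw [rinner_self_eq_sum] at h
  ext i j
  have h1 : ∀ j ∈ Finset.univ, (0:ℝ) ≤ ∑ i, Complex.normSq (M i j) := by
    intro j _; exact Finset.sum_nonneg fun i _ => Complex.normSq_nonneg _
  have := (Finset.sum_eq_zero_iff_of_nonneg h1).1 h j (Finset.mem_univ j)
  have h2 : ∀ i ∈ Finset.univ, (0:ℝ) ≤ Complex.normSq (M i j) := by
    intro i _; exact Complex.normSq_nonneg _
  have := (Finset.sum_eq_zero_iff_of_nonneg h2).1 this i (Finset.mem_univ i)
  simpa [Complex.normSq_eq_zero] using this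

lemma frob_eq (M : Matrix (Fin p) (Fin q) ℂ) : frob M = Real.sqrt (rinner M M) := rfl

lemma frob_nonneg (M : Matrix (Fin p) (Fin q) ℂ) : 0 ≤ frob M := Real.sqrt_nonneg _

lemma frob_sq (M : Matrix (Fin p) (Fin q) ℂ) : frob M ^ 2 = rinner M M := by
  rw [frob_eq, Real.sq_sqrt (rinner_self_nonneg M)]

lemma frob_eq_zero_iff {M : Matrix (Fin p) (Fin q) ℂ} : frob M = 0 ↔ M = 0 := by
  constructor
  · intro h
    apply rinner_self_eq_zero
    have := frob_sq M
    rw [h] at this; simpa using this.symm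
  · rintro rfl
    simp [frob_eq, rinner, Matrix.trace]

lemma frob_pos {M : Matrix (Fin p) (Fin q) ℂ} (h : M ≠ 0) : 0 < frob M :=
  lt_of_le_of_ne (frob_nonneg M) (fun e => h (frob_eq_zero_iff.1 e.symm))

lemma rinner_smul_left (c : ℝ) (M P : Matrix (Fin p) (Fin q) ℂ) :
    rinner (c • M) P = c * rinner M P := by
  unfold rinner
  rw [Matrix.conjTranspose_smul, Matrix.smul_mul, Matrix.trace_smul]
  simp [Complex.real_smul]

lemma rinner_comm (M N : Matrix (Fin p) (Fin q) ℂ) : rinner M N = rinner N M := by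
  unfold rinner
  have : Nᴴ * M = (Mᴴ * N)ᴴ := by simp
  rw [this, Matrix.trace_conjTranspose]
  simp

lemma frob_smul (c : ℝ) (M : Matrix (Fin p) (Fin q) ℂ) : frob (c • M) = |c| * frob M := by
  rw [frob_eq, frob_eq, rinner_smul_left, rinner_comm, rinner_smul_left, rinner_comm M M,
    ← mul_assoc]
  have : c * c = |c| ^ 2 := by rw [sq_abs]; ring
  rw [this, Real.sqrt_mul (by positivity), Real.sqrt_sq (abs_nonneg c)]

end Aux1

section Aux2
variable {n r : ℕ}

lemma skew_herm_re_trace {K H : Matrix (Fin r) (Fin r) ℂ} (hK : Kᴴ = -K) (hH : Hᴴ = H) :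
    (Matrix.trace (Kᴴ * H)).re = 0 := by
  have h1 : star (Matrix.trace (Kᴴ * H)) = - (Matrix.trace (Kᴴ * H)) := by
    rw [← Matrix.trace_conjTranspose, Matrix.conjTranspose_mul, Matrix.conjTranspose_conjTranspose,
      hH, hK, Matrix.trace_mul_comm]
    simp [Matrix.mul_neg]
  have := congrArg Complex.re h1
  simp only [Complex.star_def, Complex.conj_re, Complex.neg_re] at this
  linarith

lemma horiz_herm {z w : Matrix (Fin n) (Fin r) ℂ} (hz : zᴴ * z = 1)
    (h : ∀ K : Matrix (Fin r) (Fin r) ℂ, Kᴴ = -K → (Matrix.trace ((z * K)ᴴ * w)).re = 0) :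
    (zᴴ * w)ᴴ = zᴴ * w := by
  set M := zᴴ * w with hM
  set K := (2⁻¹ : ℂ) • (M - Mᴴ) with hKdef
  have hK : Kᴴ = -K := by
    rw [hKdef, Matrix.conjTranspose_smul, Matrix.conjTranspose_sub,
      Matrix.conjTranspose_conjTranspose]
    rw [show star (2⁻¹ : ℂ) = (2⁻¹ : ℂ) by simp]
    module
  have hH' : ((2⁻¹ : ℂ) • (M + Mᴴ))ᴴ = (2⁻¹ : ℂ) • (M + Mᴴ) := by
    rw [Matrix.conjTranspose_smul, Matrix.conjTranspose_add, Matrix.conjTranspose_conjTranspose]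
    rw [show star (2⁻¹ : ℂ) = (2⁻¹ : ℂ) by simp]
    module
  have h0 : (Matrix.trace (Kᴴ * M)).re = 0 := by
    have := h K hK
    rwa [Matrix.conjTranspose_mul, Matrix.mul_assoc, ← hM] at this
  have hsplit : M = (2⁻¹ : ℂ) • (M + Mᴴ) + K := by rw [hKdef]; module
  have h2 : (Matrix.trace (Kᴴ * M)).re
      = (Matrix.trace (Kᴴ * ((2⁻¹ : ℂ) • (M + Mᴴ)))).re + (Matrix.trace (Kᴴ * K)).re := by
    conv_lhs => rw [hsplit]
    rw [Matrix.mul_add, Matrix.trace_add, Complex.add_re]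
  have h3 : (Matrix.trace (Kᴴ * ((2⁻¹ : ℂ) • (M + Mᴴ)))).re = 0 :=
    skew_herm_re_trace hK hH'
  have h4 : rinner K K = 0 := by
    unfold rinner; rw [h0, h3] at h2; linarith
  have hK0 : K = 0 := rinner_self_eq_zero h4
  have h5 : M - Mᴴ = 0 := by
    have h5 : (2⁻¹ : ℂ) • (M - Mᴴ) = 0 := hK0
    rcases smul_eq_zero.1 h5 with h6 | h6
    · norm_num at h6
    · exact h6
  have := sub_eq_zero.1 h5
  rw [← this]

lemma cross_rinner_self {z w : Matrix (Fin n) (Fin r) ℂ} (hz : zᴴ * z = 1)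
    (hH : (zᴴ * w)ᴴ = zᴴ * w) :
    rinner (z * wᴴ + w * zᴴ) (z * wᴴ + w * zᴴ)
      = 2 * rinner w w + 2 * rinner (zᴴ * w) (zᴴ * w) := by
  unfold rinner
  have hwz : wᴴ * z = zᴴ * w := by
    have h' : (zᴴ * w)ᴴ = wᴴ * z := by
      rw [Matrix.conjTranspose_mul, Matrix.conjTranspose_conjTranspose]
    rw [← h', hH]
  have hMh : (z * wᴴ + w * zᴴ)ᴴ = z * wᴴ + w * zᴴ := by
    rw [Matrix.conjTranspose_add, Matrix.conjTranspose_mul, Matrix.conjTranspose_mul,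
      Matrix.conjTranspose_conjTranspose, Matrix.conjTranspose_conjTranspose, add_comm]
  rw [hMh]
  have expand : (z * wᴴ + w * zᴴ) * (z * wᴴ + w * zᴴ)
      = z * wᴴ * (z * wᴴ) + z * wᴴ * (w * zᴴ) + w * zᴴ * (z * wᴴ) + w * zᴴ * (w * zᴴ) := by
    rw [Matrix.add_mul, Matrix.mul_add, Matrix.mul_add]
    abel
  rw [expand]
  rw [Matrix.trace_add, Matrix.trace_add, Matrix.trace_add]
  have t1 : Matrix.trace (z * wᴴ * (z * wᴴ)) = Matrix.trace ((zᴴ*w)ᴴ * (zᴴ*w)) := by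
    rw [Matrix.mul_assoc z wᴴ (z * wᴴ), Matrix.trace_mul_comm]
    rw [show wᴴ * (z * wᴴ) * z = (wᴴ * z) * (wᴴ * z) by simp only [Matrix.mul_assoc]]
    rw [hwz, Matrix.conjTranspose_mul, Matrix.conjTranspose_conjTranspose, hwz]
  have t4 : Matrix.trace (w * zᴴ * (w * zᴴ)) = Matrix.trace ((zᴴ*w)ᴴ * (zᴴ*w)) := by
    rw [Matrix.mul_assoc w zᴴ (w * zᴴ), Matrix.trace_mul_comm]
    rw [show zᴴ * (w * zᴴ) * w = (zᴴ * w) * (zᴴ * w) by simp only [Matrix.mul_assoc]]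
    rw [Matrix.conjTranspose_mul, Matrix.conjTranspose_conjTranspose, hwz]
  have t2 : Matrix.trace (z * wᴴ * (w * zᴴ)) = Matrix.trace (wᴴ * w) := by
    rw [Matrix.mul_assoc z wᴴ (w * zᴴ), Matrix.trace_mul_comm]
    rw [show wᴴ * (w * zᴴ) * z = wᴴ * (w * (zᴴ * z)) by simp only [Matrix.mul_assoc]]
    rw [hz, Matrix.mul_one]
  have t3 : Matrix.trace (w * zᴴ * (z * wᴴ)) = Matrix.trace (wᴴ * w) := by
    rw [Matrix.mul_assoc w zᴴ (z * wᴴ), ← Matrix.mul_assoc zᴴ z wᴴ, hz, Matrix.one_mul,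
      Matrix.trace_mul_comm]
  rw [t1, t2, t3, t4]
  simp only [Complex.add_re]
  ring

lemma rinner_proj_le {z w : Matrix (Fin n) (Fin r) ℂ} (hz : zᴴ * z = 1) :
    rinner (zᴴ * w) (zᴴ * w) ≤ rinner w w := by
  have e1 : (1 - z * zᴴ) * w = w - z * (zᴴ * w) := by
    rw [Matrix.sub_mul, Matrix.one_mul, Matrix.mul_assoc]
  have hX1 : wᴴ * (z * (zᴴ * w)) = (zᴴ * w)ᴴ * (zᴴ * w) := by
    rw [Matrix.conjTranspose_mul, Matrix.conjTranspose_conjTranspose]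
    simp only [Matrix.mul_assoc]
  have hX3 : (z * (zᴴ * w))ᴴ * (z * (zᴴ * w)) = (zᴴ * w)ᴴ * (zᴴ * w) := by
    rw [Matrix.conjTranspose_mul]
    rw [show (zᴴ * w)ᴴ * zᴴ * (z * (zᴴ * w)) = (zᴴ * w)ᴴ * ((zᴴ * z) * (zᴴ * w)) by
      simp only [Matrix.mul_assoc]]
    rw [hz, Matrix.one_mul]
  have hX4 : (z * (zᴴ * w))ᴴ * w = (zᴴ * w)ᴴ * (zᴴ * w) := by
    rw [Matrix.conjTranspose_mul, Matrix.mul_assoc]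
  have key : rinner w w - rinner (zᴴ * w) (zᴴ * w)
      = rinner ((1 - z * zᴴ) * w) ((1 - z * zᴴ) * w) := by
    unfold rinner
    rw [e1, Matrix.conjTranspose_sub, Matrix.sub_mul, Matrix.mul_sub, Matrix.mul_sub,
      hX1, hX3, hX4]
    rw [show wᴴ * w - (zᴴ * w)ᴴ * (zᴴ * w) - ((zᴴ * w)ᴴ * (zᴴ * w) - (zᴴ * w)ᴴ * (zᴴ * w))
      = wᴴ * w - (zᴴ * w)ᴴ * (zᴴ * w) by abel]
    rw [Matrix.trace_sub, Complex.sub_re]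
  have h0 : 0 ≤ rinner ((1 - z * zᴴ) * w) ((1 - z * zᴴ) * w) := rinner_self_nonneg _
  linarith

end Aux2

section Aux3
variable {n r m : ℕ}

noncomputable def Fq (A : Fin m → Matrix (Fin n) (Fin n) ℂ) (M : Matrix (Fin n) (Fin n) ℂ) : ℝ :=
  (∑ j, rinner M (A j) ^ 2) / frob M ^ 2

lemma continuous_rinner_left (N : Matrix (Fin n) (Fin n) ℂ) :
    Continuous fun M : Matrix (Fin n) (Fin n) ℂ => rinner M N := by
  unfold rinner
  exact Complex.continuous_re.comp
    ((continuous_id.matrix_conjTranspose.matrix_mul continuous_const).matrix_trace)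

lemma continuous_frob : Continuous fun M : Matrix (Fin n) (Fin n) ℂ => frob M := by
  have : Continuous fun M : Matrix (Fin n) (Fin n) ℂ => rinner M M := by
    unfold rinner
    exact Complex.continuous_re.comp
      ((continuous_id.matrix_conjTranspose.matrix_mul continuous_id).matrix_trace)
  exact Real.continuous_sqrt.comp this

lemma continuousAt_Fq (A : Fin m → Matrix (Fin n) (Fin n) ℂ) {M₀ : Matrix (Fin n) (Fin n) ℂ}
    (h : M₀ ≠ 0) : ContinuousAt (Fq A) M₀ := by
  apply ContinuousAt.div
  · exact (continuous_finset_sum _ fun j _ => (continuous_rinner_left (A j)).pow 2).continuousAt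
  · exact (continuous_frob.pow 2).continuousAt
  · exact pow_ne_zero 2 (ne_of_gt (frob_pos h))

lemma Fq_smul (A : Fin m → Matrix (Fin n) (Fin n) ℂ) {t : ℝ} (ht : t ≠ 0)
    (M : Matrix (Fin n) (Fin n) ℂ) : Fq A (t • M) = Fq A M := by
  unfold Fq
  simp only [rinner_smul_left, frob_smul, mul_pow, sq_abs]
  rw [← Finset.mul_sum, mul_div_mul_left]
  exact pow_ne_zero 2 ht

def iso {n r : ℕ} (hrn : r ≤ n) : Matrix (Fin n) (Fin r) ℂ :=
  Matrix.of fun i j => if (i : ℕ) = (j : ℕ) then 1 else 0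

lemma iso_spec (hrn : r ≤ n) : (iso hrn)ᴴ * iso hrn = 1 := by
  ext j k
  rw [Matrix.mul_apply]
  simp only [Matrix.conjTranspose_apply, iso, Matrix.of_apply, Matrix.one_apply]
  rw [Finset.sum_eq_single (Fin.castLE hrn j)]
  · simp only [Fin.coe_castLE]
    by_cases h : j = k
    · subst h; simp
    · rw [if_neg (show ¬((j:ℕ) = (k:ℕ)) from by simpa [Fin.ext_iff] using h), if_neg h]
      simp
  · intro i _ hi
    have : ¬((i : ℕ) = (j : ℕ)) := by
      intro hc
      exact hi (by ext; simpa using hc)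
    rw [if_neg this]
    simp
  · intro hmem
    exact absurd (Finset.mem_univ _) hmem

end Aux3

section Aux4
variable {n r : ℕ}

lemma exists_polar (u : Matrix (Fin n) (Fin r) ℂ) (hdet : IsUnit (uᴴ * u).det) :
    ∃ (z : Matrix (Fin n) (Fin r) ℂ) (S : Matrix (Fin r) (Fin r) ℂ),
      zᴴ * z = 1 ∧ Sᴴ = S ∧ u = z * S := by
  have hPSD : (uᴴ * u).PosSemidef := Matrix.posSemidef_conjTranspose_mul_self u
  set S := hPSD.sqrt with hSdef
  have hS2 : S * S = uᴴ * u := by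
    have hsp := hPSD.1.spectral_theorem
    rw [Unitary.conjStarAlgAut_apply] at hsp
    have hU : (star hPSD.1.eigenvectorUnitary : Matrix (Fin r) (Fin r) ℂ) * hPSD.1.eigenvectorUnitary = 1 :=
      Unitary.coe_star_mul_self _
    rw [hSdef, Matrix.PosSemidef.sqrt]
    conv_rhs => rw [hsp]
    rw [show ∀ (X Y Z W : Matrix (Fin r) (Fin r) ℂ), X * Y * Z * (X * W * Z) = X * (Y * (Z * X) * W) * Z by
      intro X Y Z W; simp only [Matrix.mul_assoc]]
    rw [hU, Matrix.mul_one, diagonal_mul_diagonal]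
    congr 3
    ext i
    simp only [Function.comp_apply]
    rw [← RCLike.ofReal_mul, Real.mul_self_sqrt (hPSD.eigenvalues_nonneg i)]
  have hSh : Sᴴ = S := by
    rw [hSdef, Matrix.PosSemidef.sqrt]
    simp [Matrix.mul_assoc, ← Matrix.star_eq_conjTranspose]
    congr 2
    ext i j
    by_cases h : i = j
    · subst h; simp
    · simp [h, Ne.symm h]
  have hdetS : IsUnit S.det := by
    have : IsUnit (S.det * S.det) := by
      rw [← Matrix.det_mul, hS2]; exact hdet
    exact isUnit_of_mul_isUnit_left this
  refine ⟨u * S⁻¹, S, ?_, hSh, ?_⟩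
  · rw [Matrix.conjTranspose_mul, Matrix.conjTranspose_nonsing_inv, hSh]
    rw [show S⁻¹ * uᴴ * (u * S⁻¹) = S⁻¹ * (uᴴ * u) * S⁻¹ by simp only [Matrix.mul_assoc]]
    rw [← hS2]
    rw [show S⁻¹ * (S * S) * S⁻¹ = S⁻¹ * S * (S * S⁻¹) by simp only [Matrix.mul_assoc]]
    rw [Matrix.nonsing_inv_mul S hdetS, Matrix.mul_nonsing_inv S hdetS, Matrix.one_mul]
  · rw [Matrix.mul_assoc, Matrix.nonsing_inv_mul S hdetS, Matrix.mul_one]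

lemma vnsq_re (ψ : Fin n → ℂ) : (dotProduct (star ψ) ψ).re = ∑ i, Complex.normSq (ψ i) := by
  unfold dotProduct
  rw [Complex.re_sum]
  congr 1; ext i
  simp only [Pi.star_apply, Complex.star_def]
  rw [← Complex.normSq_eq_conj_mul_self]
  simp

lemma mulVec_norm_le (u : Matrix (Fin n) (Fin r) ℂ) (φ : Fin r → ℂ) :
    (dotProduct (star (u *ᵥ φ)) (u *ᵥ φ)).re
      ≤ rinner u u * (dotProduct (star φ) φ).re := by
  rw [vnsq_re, vnsq_re]
  have key : ∀ i, Complex.normSq ((u *ᵥ φ) i)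
      ≤ (∑ j, Complex.normSq (u i j)) * ∑ j, Complex.normSq (φ j) := by
    intro i
    have h1 : ‖(u *ᵥ φ) i‖ ≤ ∑ j, ‖u i j‖ * ‖φ j‖ := by
      unfold Matrix.mulVec dotProduct
      refine (norm_sum_le _ _).trans ?_
      simp
    have h2 : (∑ j, ‖u i j‖ * ‖φ j‖) ^ 2
        ≤ (∑ j, ‖u i j‖ ^ 2) * ∑ j, ‖φ j‖ ^ 2 :=
      Finset.sum_mul_sq_le_sq_mul_sq _ _ _
    calc Complex.normSq ((u *ᵥ φ) i) = ‖(u *ᵥ φ) i‖ ^ 2 := (Complex.sq_norm _).symm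
      _ ≤ (∑ j, ‖u i j‖ * ‖φ j‖) ^ 2 := by
          apply pow_le_pow_left₀ (norm_nonneg _) h1
      _ ≤ (∑ j, ‖u i j‖ ^ 2) * ∑ j, ‖φ j‖ ^ 2 := h2
      _ = (∑ j, Complex.normSq (u i j)) * ∑ j, Complex.normSq (φ j) := by
          simp [Complex.sq_norm]
  calc (∑ i, Complex.normSq ((u *ᵥ φ) i))
      ≤ ∑ i, (∑ j, Complex.normSq (u i j)) * ∑ j, Complex.normSq (φ j) :=
        Finset.sum_le_sum fun i _ => key i
    _ = (∑ i, ∑ j, Complex.normSq (u i j)) * ∑ j, Complex.normSq (φ j) := by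
        rw [Finset.sum_mul]
    _ = rinner u u * ∑ j, Complex.normSq (φ j) := by
        rw [rinner_self_eq_sum, Finset.sum_comm]

lemma isUnit_det_conjTranspose_mul_self_of_inj (M : Matrix (Fin n) (Fin r) ℂ)
    (h : ∀ φ : Fin r → ℂ, φ ≠ 0 → M *ᵥ φ ≠ 0) : IsUnit ((Mᴴ * M).det) := by
  rw [← Matrix.isUnit_iff_isUnit_det, ← Matrix.mulVec_injective_iff_isUnit]
  intro a b hab
  have hker : ∀ φ : Fin r → ℂ, (Mᴴ * M) *ᵥ φ = 0 → φ = 0 := by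
    intro φ hφ
    by_contra hne
    have hkey : dotProduct (star φ) ((Mᴴ * M) *ᵥ φ)
        = dotProduct (star (M *ᵥ φ)) (M *ᵥ φ) := by
      rw [← Matrix.mulVec_mulVec, Matrix.dotProduct_mulVec, ← Matrix.star_mulVec]
    rw [hφ, dotProduct_zero] at hkey
    have := dotProduct_star_self_eq_zero.mp hkey.symm
    exact h φ hne this
  have : (Mᴴ * M) *ᵥ (a - b) = 0 := by
    rw [Matrix.mulVec_sub, hab, sub_self]
  have := hker _ this
  exact sub_eq_zero.mp this

lemma perturb_inj (hrn : r ≤ n) (u : Matrix (Fin n) (Fin r) ℂ) {T : ℝ}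
    (hT : rinner u u < T ^ 2) (φ : Fin r → ℂ) (hφ : φ ≠ 0) : (u + T • iso hrn) *ᵥ φ ≠ 0 := by
  intro hc
  have hu : u *ᵥ φ = -(T • ((iso hrn) *ᵥ φ)) := by
    have : u *ᵥ φ + T • ((iso hrn) *ᵥ φ) = 0 := by
      rw [← Matrix.smul_mulVec, ← Matrix.add_mulVec]
      exact hc
    linear_combination (norm := module) this
  have hnorm : (dotProduct (star (u *ᵥ φ)) (u *ᵥ φ)).re
      = T ^ 2 * (dotProduct (star φ) φ).re := by
    rw [hu]
    rw [star_neg, star_smul, neg_dotProduct, dotProduct_neg, neg_neg,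
      smul_dotProduct, dotProduct_smul]
    have hz : dotProduct (star ((iso hrn) *ᵥ φ)) ((iso hrn) *ᵥ φ)
        = dotProduct (star φ) φ := by
      rw [Matrix.star_mulVec, Matrix.dotProduct_mulVec, Matrix.vecMul_vecMul, iso_spec,
        Matrix.vecMul_one]
    rw [hz]
    rw [Complex.smul_re, Complex.smul_re]
    simp only [star_trivial, smul_eq_mul]
    ring
  have hS : 0 < (dotProduct (star φ) φ).re := by
    rw [vnsq_re]
    obtain ⟨i, hi⟩ : ∃ i, φ i ≠ 0 := by
      by_contra hc'
      push_neg at hc'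
      exact hφ (funext hc')
    exact Finset.sum_pos' (fun i _ => Complex.normSq_nonneg _)
      ⟨i, Finset.mem_univ i, Complex.normSq_pos.mpr hi⟩
  have hle := mulVec_norm_le u φ
  rw [hnorm] at hle
  nlinarith

lemma matrix_expand (hrn : r ≤ n) (u : Matrix (Fin n) (Fin r) ℂ) (t : ℝ) :
    (u + t • iso hrn)ᴴ * (u + t • iso hrn)
      = uᴴ * u + t • (uᴴ * iso hrn + (iso hrn)ᴴ * u) + (t * t) • 1 := by
  rw [← iso_spec hrn]
  simp only [Matrix.conjTranspose_add, Matrix.conjTranspose_smul, star_trivial,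
    Matrix.add_mul, Matrix.mul_add, Matrix.smul_mul, Matrix.mul_smul, smul_smul]
  module

lemma eventually_good (hrn : r ≤ n) (u : Matrix (Fin n) (Fin r) ℂ) :
    ∀ᶠ t : ℝ in nhdsWithin 0 (Set.Ioi 0),
      IsUnit ((u + t • iso hrn)ᴴ * (u + t • iso hrn)).det := by
  classical
  set B₀ := uᴴ * u with hB0
  set B₁ := uᴴ * iso hrn + (iso hrn)ᴴ * u with hB1
  set P : Matrix (Fin r) (Fin r) (Polynomial ℂ) :=
    Matrix.of fun i j => Polynomial.C (B₀ i j) + Polynomial.C (B₁ i j) * Polynomial.X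
      + Polynomial.C ((1 : Matrix (Fin r) (Fin r) ℂ) i j) * Polynomial.X ^ 2 with hP
  have heval : ∀ t : ℝ, Polynomial.eval ((t : ℂ)) P.det
      = ((u + t • iso hrn)ᴴ * (u + t • iso hrn)).det := by
    intro t
    have h1 : Polynomial.eval ((t : ℂ)) P.det
        = ((Polynomial.evalRingHom ((t : ℂ))).mapMatrix P).det := by
      rw [← RingHom.map_det]
      rfl
    rw [h1, matrix_expand hrn u t]
    congr 1
    ext i j
    simp only [RingHom.mapMatrix_apply, Matrix.map_apply, hP, Matrix.of_apply,
      Polynomial.eval_add, Polynomial.eval_mul, Polynomial.eval_C, Polynomial.eval_X,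
      Polynomial.eval_pow, Polynomial.coe_evalRingHom]
    simp only [Matrix.add_apply, Matrix.smul_apply, Complex.real_smul]
    simp only [hB1, Matrix.add_apply]
    push_cast
    ring
  have hPne : P.det ≠ 0 := by
    set T : ℝ := 1 + Real.sqrt (rinner u u) with hTdef
    have hsq : Real.sqrt (rinner u u) ^ 2 = rinner u u := Real.sq_sqrt (rinner_self_nonneg u)
    have hT : rinner u u < T ^ 2 := by
      have h0 : 0 ≤ Real.sqrt (rinner u u) := Real.sqrt_nonneg _
      nlinarith
    have hu := isUnit_det_conjTranspose_mul_self_of_inj (u + T • iso hrn)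
      (fun φ hφ => perturb_inj hrn u hT φ hφ)
    intro hc
    rw [← heval T] at hu
    rw [hc] at hu
    simp at hu
  have hfin : {x : ℂ | P.det.IsRoot x}.Finite := Polynomial.finite_setOf_isRoot hPne
  have hGfin : ({t : ℝ | Polynomial.IsRoot P.det ((t:ℂ))} \ {0}).Finite := by
    apply Set.Finite.subset (hfin.image Complex.re)
    rintro t ⟨ht, -⟩
    exact ⟨(t : ℂ), ht, by simp⟩
  have h0G : (0 : ℝ) ∈ ({t : ℝ | Polynomial.IsRoot P.det ((t:ℂ))} \ {0})ᶜ := by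
    simp
  have hev : ∀ᶠ t : ℝ in nhds 0, t ∈ ({t : ℝ | Polynomial.IsRoot P.det ((t:ℂ))} \ {0})ᶜ :=
    hGfin.isClosed.isOpen_compl.eventually_mem h0G
  filter_upwards [self_mem_nhdsWithin, eventually_nhdsWithin_of_eventually_nhds hev]
    with t htpos htG
  have htne : t ≠ 0 := ne_of_gt htpos
  have hnr : ¬ Polynomial.IsRoot P.det ((t:ℂ)) := by
    intro hroot
    exact htG ⟨hroot, htne⟩
  have hne' : Polynomial.eval ((t:ℂ)) P.det ≠ 0 := hnr
  rw [heval t] at hne'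
  exact isUnit_iff_ne_zero.mpr hne'

end Aux4

/-! ### Main auxiliary bounds -/

section Main
variable {n r m : ℕ}

lemma aHat_mem_nonneg (A : Fin m → Matrix (Fin n) (Fin n) ℂ) (z : Matrix (Fin n) (Fin r) ℂ) :
    ∀ t ∈ {t : ℝ | ∃ w : Matrix (Fin n) (Fin r) ℂ,
      (∀ K : Matrix (Fin r) (Fin r) ℂ, Kᴴ = -K →
        (Matrix.trace ((z * K)ᴴ * w)).re = 0) ∧
      frob w = 1 ∧ t = ∑ j, rinner (z * wᴴ + w * zᴴ) (A j) ^ 2}, 0 ≤ t := by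
  rintro t ⟨w, -, -, rfl⟩
  positivity

lemma aHat_nonneg (A : Fin m → Matrix (Fin n) (Fin n) ℂ) (z : Matrix (Fin n) (Fin r) ℂ) :
    0 ≤ aHat A z :=
  Real.sInf_nonneg (aHat_mem_nonneg A z)

lemma aHat_le_of_rep (A : Fin m → Matrix (Fin n) (Fin n) ℂ) (z w : Matrix (Fin n) (Fin r) ℂ)
    (hz : zᴴ * z = 1) (hherm : (zᴴ * w)ᴴ = zᴴ * w) (hw : w ≠ 0) :
    aHat A z ≤ (∑ j, rinner (z * wᴴ + w * zᴴ) (A j) ^ 2) / frob w ^ 2 := by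
  have hc : 0 < frob w := frob_pos hw
  set c : ℝ := frob w with hcdef
  have h1 : z * ((c⁻¹ • w))ᴴ + (c⁻¹ • w) * zᴴ = c⁻¹ • (z * wᴴ + w * zᴴ) := by
    rw [Matrix.conjTranspose_smul, star_trivial, Matrix.mul_smul, Matrix.smul_mul, smul_add]
  have hmem : (∑ j, rinner (z * (c⁻¹ • w)ᴴ + (c⁻¹ • w) * zᴴ) (A j) ^ 2)
      ∈ {t : ℝ | ∃ w' : Matrix (Fin n) (Fin r) ℂ,
        (∀ K : Matrix (Fin r) (Fin r) ℂ, Kᴴ = -K →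
          (Matrix.trace ((z * K)ᴴ * w')).re = 0) ∧
        frob w' = 1 ∧ t = ∑ j, rinner (z * w'ᴴ + w' * zᴴ) (A j) ^ 2} := by
    refine ⟨c⁻¹ • w, ?_, ?_, rfl⟩
    · intro K hK
      have hb : (Matrix.trace ((z * K)ᴴ * w)).re = 0 := by
        rw [Matrix.conjTranspose_mul, Matrix.mul_assoc]
        exact skew_herm_re_trace hK hherm
      rw [Matrix.mul_smul, Matrix.trace_smul]
      rw [Complex.smul_re, hb]
      simp
    · rw [frob_smul, abs_of_pos (by positivity)]
      rw [inv_mul_cancel₀ (ne_of_gt hc)]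
  have hle := csInf_le ⟨0, aHat_mem_nonneg A z⟩ hmem
  refine le_trans hle ?_
  rw [h1]
  simp only [rinner_smul_left, mul_pow]
  rw [← Finset.mul_sum, inv_pow, inv_mul_eq_div]

lemma frob_rep_sq_le (z w : Matrix (Fin n) (Fin r) ℂ) (hz : zᴴ * z = 1)
    (hherm : (zᴴ * w)ᴴ = zᴴ * w) :
    frob (z * wᴴ + w * zᴴ) ^ 2 ≤ 4 * frob w ^ 2 := by
  rw [frob_sq, frob_sq, cross_rinner_self hz hherm]
  have := rinner_proj_le (w := w) hz
  linarith

lemma frob_rep_sq_ge (z w : Matrix (Fin n) (Fin r) ℂ) (hz : zᴴ * z = 1)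
    (hherm : (zᴴ * w)ᴴ = zᴴ * w) :
    2 * frob w ^ 2 ≤ frob (z * wᴴ + w * zᴴ) ^ 2 := by
  rw [frob_sq, frob_sq, cross_rinner_self hz hherm]
  have := rinner_self_nonneg (zᴴ * w)
  linarith

lemma lower_generic (A : Fin m → Matrix (Fin n) (Fin n) ℂ) (u v : Matrix (Fin n) (Fin r) ℂ)
    (hdet : IsUnit ((uᴴ * u).det)) (hΔ : u * vᴴ + v * uᴴ ≠ 0) :
    sInf {t : ℝ | ∃ z : Matrix (Fin n) (Fin r) ℂ, zᴴ * z = 1 ∧ t = aHat A z}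
      ≤ 4 * Fq A (u * vᴴ + v * uᴴ) := by
  obtain ⟨z, S, hz, hSh, huzS⟩ := exists_polar u hdet
  set wt := v * S with hwt
  have hrep1 : u * vᴴ + v * uᴴ = z * wtᴴ + wt * zᴴ := by
    rw [huzS, hwt, Matrix.conjTranspose_mul, Matrix.conjTranspose_mul, hSh]
    simp only [Matrix.mul_assoc]
  set K := (2⁻¹ : ℂ) • ((zᴴ * wt)ᴴ - zᴴ * wt) with hKdef
  have hKs : Kᴴ = -K := by
    rw [hKdef, Matrix.conjTranspose_smul, Matrix.conjTranspose_sub,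
      Matrix.conjTranspose_conjTranspose]
    rw [show star (2⁻¹ : ℂ) = (2⁻¹ : ℂ) by simp]
    module
  set w := wt + z * K with hwdef
  have hrep : z * wᴴ + w * zᴴ = u * vᴴ + v * uᴴ := by
    rw [hwdef]
    simp only [Matrix.conjTranspose_add, Matrix.conjTranspose_mul, hKs, Matrix.mul_add,
      Matrix.add_mul, Matrix.mul_neg, Matrix.neg_mul, Matrix.mul_assoc]
    rw [hrep1]
    abel
  have hherm : (zᴴ * w)ᴴ = zᴴ * w := by
    have hzw : zᴴ * w = zᴴ * wt + K := by
      rw [hwdef, Matrix.mul_add]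
      congr 1
      rw [← Matrix.mul_assoc zᴴ z K, hz, Matrix.one_mul]
    have h1 : zᴴ * w = (2⁻¹ : ℂ) • (zᴴ * wt + (zᴴ * wt)ᴴ) := by
      rw [hzw, hKdef]
      module
    rw [h1, Matrix.conjTranspose_smul, Matrix.conjTranspose_add,
      Matrix.conjTranspose_conjTranspose]
    rw [show star (2⁻¹ : ℂ) = (2⁻¹ : ℂ) by simp]
    module
  have hwne : w ≠ 0 := by
    intro h0
    apply hΔ
    rw [← hrep, h0]
    simp
  have h4 := aHat_le_of_rep A z w hz hherm hwne
  rw [hrep] at h4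
  have hfb := frob_rep_sq_le z w hz hherm
  rw [hrep] at hfb
  have hsinf : sInf {t : ℝ | ∃ z : Matrix (Fin n) (Fin r) ℂ, zᴴ * z = 1 ∧ t = aHat A z}
      ≤ aHat A z := by
    apply csInf_le
    · refine ⟨0, ?_⟩
      rintro t ⟨z', hz', rfl⟩
      exact aHat_nonneg A z'
    · exact ⟨z, hz, rfl⟩
  have hSum : 0 ≤ ∑ j, rinner (u * vᴴ + v * uᴴ) (A j) ^ 2 := by positivity
  have hfΔ : 0 < frob (u * vᴴ + v * uᴴ) ^ 2 := by
    have := frob_pos hΔ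
    positivity
  have hfw : 0 < frob w ^ 2 := by
    have := frob_pos hwne
    positivity
  have key : (∑ j, rinner (u * vᴴ + v * uᴴ) (A j) ^ 2) / frob w ^ 2
      ≤ 4 * Fq A (u * vᴴ + v * uᴴ) := by
    unfold Fq
    rw [show (4:ℝ) * ((∑ j, rinner (u * vᴴ + v * uᴴ) (A j) ^ 2) / frob (u * vᴴ + v * uᴴ) ^ 2)
      = (∑ j, rinner (u * vᴴ + v * uᴴ) (A j) ^ 2) / (frob (u * vᴴ + v * uᴴ) ^ 2 / 4) by
        field_simp]
    apply div_le_div_of_nonneg_left hSum (by linarith) (by linarith)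
  calc sInf {t : ℝ | ∃ z : Matrix (Fin n) (Fin r) ℂ, zᴴ * z = 1 ∧ t = aHat A z}
      ≤ aHat A z := hsinf
    _ ≤ (∑ j, rinner (u * vᴴ + v * uᴴ) (A j) ^ 2) / frob w ^ 2 := h4
    _ ≤ 4 * Fq A (u * vᴴ + v * uᴴ) := key

lemma two_rep (a b : Matrix (Fin n) (Fin r) ℂ) :
    (a - b) * (a + b)ᴴ + (a + b) * (a - b)ᴴ = (2:ℝ) • (a * aᴴ - b * bᴴ) := by
  simp only [Matrix.conjTranspose_add, Matrix.conjTranspose_sub, Matrix.add_mul, Matrix.mul_add,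
    Matrix.sub_mul, Matrix.mul_sub]
  module

lemma lower_all (hrn : r ≤ n) (A : Fin m → Matrix (Fin n) (Fin n) ℂ)
    (x y : Matrix (Fin n) (Fin r) ℂ) (hne : x * xᴴ ≠ y * yᴴ) :
    sInf {t : ℝ | ∃ z : Matrix (Fin n) (Fin r) ℂ, zᴴ * z = 1 ∧ t = aHat A z}
      ≤ 4 * Fq A (x * xᴴ - y * yᴴ) := by
  have hΔ : x * xᴴ - y * yᴴ ≠ 0 := sub_ne_zero.mpr hne
  set pathM : ℝ → Matrix (Fin n) (Fin n) ℂ :=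
    fun t => (x + t • iso hrn) * (x + t • iso hrn)ᴴ - y * yᴴ with hpathM
  have hpath0 : pathM 0 = x * xᴴ - y * yᴴ := by
    simp [hpathM]
  have hcont : Continuous pathM := by
    have c1 : Continuous fun t : ℝ => x + t • iso hrn :=
      continuous_const.add (continuous_id.smul continuous_const)
    exact (c1.matrix_mul c1.matrix_conjTranspose).sub continuous_const
  have hevne : ∀ᶠ t : ℝ in nhdsWithin 0 (Set.Ioi 0), pathM t ≠ 0 := by
    apply eventually_nhdsWithin_of_eventually_nhds
    apply hcont.continuousAt.eventually_ne
    rw [hpath0]; exact hΔ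
  have hbound : ∀ᶠ t : ℝ in nhdsWithin 0 (Set.Ioi 0),
      sInf {t : ℝ | ∃ z : Matrix (Fin n) (Fin r) ℂ, zᴴ * z = 1 ∧ t = aHat A z}
        ≤ 4 * Fq A (pathM t) := by
    filter_upwards [self_mem_nhdsWithin, hevne, eventually_good hrn (x - y)] with t htpos hptne
      hgood
    have huv : ((x + t • iso hrn) - y) * ((x + t • iso hrn) + y)ᴴ
        + ((x + t • iso hrn) + y) * ((x + t • iso hrn) - y)ᴴ = (2:ℝ) • pathM t :=
      two_rep _ _
    have hu_eq : (x + t • iso hrn) - y = (x - y) + t • iso hrn := by abel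
    have hdet : IsUnit ((((x + t • iso hrn) - y)ᴴ * ((x + t • iso hrn) - y)).det) := by
      rw [hu_eq]; exact hgood
    have hΔ2 : ((x + t • iso hrn) - y) * ((x + t • iso hrn) + y)ᴴ
        + ((x + t • iso hrn) + y) * ((x + t • iso hrn) - y)ᴴ ≠ 0 := by
      rw [huv]
      exact smul_ne_zero (by norm_num) hptne
    have := lower_generic A ((x + t • iso hrn) - y) ((x + t • iso hrn) + y) hdet hΔ2
    rw [huv] at this
    rwa [Fq_smul A (by norm_num : (2:ℝ) ≠ 0)] at this
  have hlim : Tendsto (fun t => 4 * Fq A (pathM t)) (nhdsWithin 0 (Set.Ioi 0))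
      (nhds (4 * Fq A (x * xᴴ - y * yᴴ))) := by
    apply Tendsto.const_mul
    have hΔ0 : pathM 0 ≠ 0 := by rw [hpath0]; exact hΔ
    have h1 : ContinuousAt (fun t => Fq A (pathM t)) 0 :=
      (continuousAt_Fq A hΔ0).comp hcont.continuousAt
    have := h1.tendsto
    rw [hpath0] at this
    exact this.mono_left nhdsWithin_le_nhds
  exact ge_of_tendsto hlim hbound

lemma upper_of_witness (A : Fin m → Matrix (Fin n) (Fin n) ℂ) (z w : Matrix (Fin n) (Fin r) ℂ)
    (hz : zᴴ * z = 1)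
    (hhoriz : ∀ K : Matrix (Fin r) (Fin r) ℂ, Kᴴ = -K →
      (Matrix.trace ((z * K)ᴴ * w)).re = 0)
    (hfw : frob w = 1) :
    aGlobal r A ≤ (∑ j, rinner (z * wᴴ + w * zᴴ) (A j) ^ 2) / 2 := by
  have hherm := horiz_herm hz hhoriz
  have hww : rinner w w = 1 := by
    rw [← frob_sq, hfw]; norm_num
  have hfr2 : 2 ≤ frob (z * wᴴ + w * zᴴ) ^ 2 := by
    rw [frob_sq, cross_rinner_self hz hherm, hww]
    have := rinner_self_nonneg (zᴴ * w)
    linarith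
  have hΔ0 : z * wᴴ + w * zᴴ ≠ 0 := by
    intro h0
    rw [h0] at hfr2
    rw [show frob (0 : Matrix (Fin n) (Fin n) ℂ) = 0 from frob_eq_zero_iff.mpr rfl] at hfr2
    norm_num at hfr2
  set pathM : ℝ → Matrix (Fin n) (Fin n) ℂ :=
    fun t => (z * wᴴ + w * zᴴ) + t • (w * wᴴ) with hpathM
  have hpath0 : pathM 0 = z * wᴴ + w * zᴴ := by simp [hpathM]
  have hcont : Continuous pathM :=
    continuous_const.add (continuous_id.smul continuous_const)
  have hid : ∀ t : ℝ, (z + t • w) * (z + t • w)ᴴ - z * zᴴ = t • pathM t := by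
    intro t
    simp only [hpathM, Matrix.conjTranspose_add, Matrix.conjTranspose_smul, star_trivial,
      Matrix.add_mul, Matrix.mul_add, Matrix.smul_mul, Matrix.mul_smul, smul_smul, smul_add]
    module
  have hevne : ∀ᶠ t : ℝ in nhdsWithin 0 (Set.Ioi 0), pathM t ≠ 0 := by
    apply eventually_nhdsWithin_of_eventually_nhds
    apply hcont.continuousAt.eventually_ne
    rw [hpath0]; exact hΔ0
  have hbdd : BddBelow {t : ℝ | ∃ x y : Matrix (Fin n) (Fin r) ℂ, x * xᴴ ≠ y * yᴴ ∧
      t = (∑ j, rinner (x * xᴴ - y * yᴴ) (A j) ^ 2) / frob (x * xᴴ - y * yᴴ) ^ 2} := by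
    refine ⟨0, ?_⟩
    rintro t ⟨x, y, -, rfl⟩
    apply div_nonneg (by positivity) (sq_nonneg _)
  have hbound : ∀ᶠ t : ℝ in nhdsWithin 0 (Set.Ioi 0), aGlobal r A ≤ Fq A (pathM t) := by
    filter_upwards [self_mem_nhdsWithin, hevne] with t htpos hptne
    have hneq : (z + t • w) * (z + t • w)ᴴ ≠ z * zᴴ := by
      apply sub_ne_zero.mp
      rw [hid t]
      exact smul_ne_zero (ne_of_gt htpos) hptne
    have hmem : Fq A ((z + t • w) * (z + t • w)ᴴ - z * zᴴ)
        ∈ {t : ℝ | ∃ x y : Matrix (Fin n) (Fin r) ℂ, x * xᴴ ≠ y * yᴴ ∧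
          t = (∑ j, rinner (x * xᴴ - y * yᴴ) (A j) ^ 2) / frob (x * xᴴ - y * yᴴ) ^ 2} :=
      ⟨z + t • w, z, hneq, rfl⟩
    have hle : aGlobal r A ≤ Fq A ((z + t • w) * (z + t • w)ᴴ - z * zᴴ) :=
      csInf_le hbdd hmem
    rwa [hid t, Fq_smul A (ne_of_gt htpos)] at hle
  have hlim : Tendsto (fun t => Fq A (pathM t)) (nhdsWithin 0 (Set.Ioi 0))
      (nhds (Fq A (z * wᴴ + w * zᴴ))) := by
    have h1 : ContinuousAt (fun t => Fq A (pathM t)) 0 :=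
      (continuousAt_Fq A (hpath0 ▸ hΔ0)).comp hcont.continuousAt
    have := h1.tendsto
    rw [hpath0] at this
    exact this.mono_left nhdsWithin_le_nhds
  have h2 : aGlobal r A ≤ Fq A (z * wᴴ + w * zᴴ) := ge_of_tendsto hlim hbound
  refine le_trans h2 ?_
  unfold Fq
  apply div_le_div_of_nonneg_left (by positivity) (by norm_num) hfr2

end Main

/-- `(1/4) inf {â(z) : z* z = I_r} ≤ a₀ ≤ (1/2) inf {â(z) : z* z = I_r}`. -/
theorem a0_between_aHat_infs (n r m : ℕ) (hrn : r ≤ n)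
    (A : Fin m → Matrix (Fin n) (Fin n) ℂ) (hA : ∀ j, (A j).IsHermitian) :
    (1 / 4) * sInf {t : ℝ | ∃ z : Matrix (Fin n) (Fin r) ℂ, zᴴ * z = 1 ∧ t = aHat A z}
      ≤ aGlobal r A ∧
    aGlobal r A ≤
      (1 / 2) * sInf {t : ℝ | ∃ z : Matrix (Fin n) (Fin r) ℂ, zᴴ * z = 1 ∧ t = aHat A z} := by
  by_cases hr : r = 0
  · subst hr
    have hZ : {t : ℝ | ∃ z : Matrix (Fin n) (Fin 0) ℂ, zᴴ * z = 1 ∧ t = aHat A z} = {0} := by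
      ext t
      simp only [Set.mem_setOf_eq, Set.mem_singleton_iff]
      constructor
      · rintro ⟨z, hz, rfl⟩
        have : aHat A z = sInf (∅ : Set ℝ) := by
          unfold aHat
          congr 1
          ext s
          simp only [Set.mem_setOf_eq, Set.mem_empty_iff_false, iff_false]
          rintro ⟨w, -, hfw, -⟩
          have : frob w = 0 := by
            rw [frob_eq]
            have : rinner w w = 0 := by
              rw [rinner_self_eq_sum]
              simp
            rw [this, Real.sqrt_zero]
          rw [this] at hfw
          norm_num at hfw
        rw [this, Real.sInf_empty]
      · rintro rfl
        refine ⟨0, ?_, ?_⟩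
        · ext i j
          exact i.elim0
        · unfold aHat
          have : {t : ℝ | ∃ w : Matrix (Fin n) (Fin 0) ℂ,
              (∀ K : Matrix (Fin 0) (Fin 0) ℂ, Kᴴ = -K →
                (Matrix.trace (((0 : Matrix (Fin n) (Fin 0) ℂ) * K)ᴴ * w)).re = 0) ∧
              frob w = 1 ∧ t = ∑ j, rinner ((0 : Matrix (Fin n) (Fin 0) ℂ) * wᴴ
                + w * (0 : Matrix (Fin n) (Fin 0) ℂ)ᴴ) (A j) ^ 2} = ∅ := by
            ext s
            simp only [Set.mem_setOf_eq, Set.mem_empty_iff_false, iff_false]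
            rintro ⟨w, -, hfw, -⟩
            have : frob w = 0 := by
              rw [frob_eq]
              have : rinner w w = 0 := by
                rw [rinner_self_eq_sum]
                simp
              rw [this, Real.sqrt_zero]
            rw [this] at hfw
            norm_num at hfw
          rw [this, Real.sInf_empty]
    have hG : aGlobal 0 A = 0 := by
      unfold aGlobal
      have : {t : ℝ | ∃ x y : Matrix (Fin n) (Fin 0) ℂ, x * xᴴ ≠ y * yᴴ ∧
          t = (∑ j, rinner (x * xᴴ - y * yᴴ) (A j) ^ 2)
            / frob (x * xᴴ - y * yᴴ) ^ 2} = ∅ := by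
        ext s
        simp only [Set.mem_setOf_eq, Set.mem_empty_iff_false, iff_false]
        rintro ⟨x, y, hne, -⟩
        apply hne
        ext i k
        rw [Matrix.mul_apply, Matrix.mul_apply]
        simp
      rw [this, Real.sInf_empty]
    rw [hZ, hG, csInf_singleton]
    norm_num
  · have hr1 : 1 ≤ r := Nat.one_le_iff_ne_zero.mpr hr
    have hn1 : 1 ≤ n := le_trans hr1 hrn
    have hZne : {t : ℝ | ∃ z : Matrix (Fin n) (Fin r) ℂ, zᴴ * z = 1 ∧ t = aHat A z}.Nonempty :=
      ⟨aHat A (iso hrn), iso hrn, iso_spec hrn, rfl⟩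
    constructor
    · -- lower bound
      unfold aGlobal
      have hRne : {t : ℝ | ∃ x y : Matrix (Fin n) (Fin r) ℂ, x * xᴴ ≠ y * yᴴ ∧
          t = (∑ j, rinner (x * xᴴ - y * yᴴ) (A j) ^ 2)
            / frob (x * xᴴ - y * yᴴ) ^ 2}.Nonempty := by
        refine ⟨_, iso hrn, 0, ?_, rfl⟩
        intro hc
        have h1 : Matrix.trace (iso hrn * (iso hrn)ᴴ) = (r : ℂ) := by
          rw [Matrix.trace_mul_comm, iso_spec hrn, Matrix.trace_one]
          simp
        rw [hc] at h1
        simp only [Matrix.mul_zero, Matrix.zero_mul, Matrix.trace_zero] at h1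
        have : (r : ℂ) ≠ 0 := by
          simp only [ne_eq, Nat.cast_eq_zero]
          omega
        exact this h1.symm
      apply le_csInf hRne
      rintro t ⟨x, y, hne, rfl⟩
      have := lower_all hrn A x y hne
      have hFq : (∑ j, rinner (x * xᴴ - y * yᴴ) (A j) ^ 2) / frob (x * xᴴ - y * yᴴ) ^ 2
          = Fq A (x * xᴴ - y * yᴴ) := rfl
      rw [hFq]
      linarith
    · -- upper bound
      have h2 : 2 * aGlobal r A
          ≤ sInf {t : ℝ | ∃ z : Matrix (Fin n) (Fin r) ℂ, zᴴ * z = 1 ∧ t = aHat A z} := by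
        apply le_csInf hZne
        rintro t ⟨z, hz, rfl⟩
        unfold aHat
        set i0 : Fin r := ⟨0, hr1⟩ with hi0
        set E : Matrix (Fin r) (Fin r) ℂ := Matrix.single i0 i0 1 with hE
        have hEherm : Eᴴ = E := by
          rw [hE]
          ext a b
          simp only [Matrix.conjTranspose_apply, Matrix.single, Matrix.of_apply]
          by_cases h1 : i0 = a <;> by_cases h2 : i0 = b <;> simp [h1, h2]
        have hEE : E * E = E := by
          rw [hE, Matrix.single_mul_single_same, mul_one]
        have htrE : Matrix.trace E = 1 := by
          rw [hE, Matrix.trace]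
          simp only [Matrix.diag, Matrix.single, Matrix.of_apply]
          rw [Finset.sum_eq_single i0]
          · simp
          · intro b _ hb
            simp [Ne.symm hb]
          · intro hmem
            exact absurd (Finset.mem_univ _) hmem
        have hfzE : frob (z * E) = 1 := by
          rw [frob_eq]
          have : rinner (z * E) (z * E) = 1 := by
            unfold rinner
            rw [Matrix.conjTranspose_mul]
            rw [show Eᴴ * zᴴ * (z * E) = Eᴴ * ((zᴴ * z) * E) by simp only [Matrix.mul_assoc]]
            rw [hz, Matrix.one_mul, hEherm, hEE, htrE]
            simp
          rw [this, Real.sqrt_one]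
        have hhoriz : ∀ K : Matrix (Fin r) (Fin r) ℂ, Kᴴ = -K →
            (Matrix.trace ((z * K)ᴴ * (z * E))).re = 0 := by
          intro K hK
          rw [Matrix.conjTranspose_mul]
          rw [show Kᴴ * zᴴ * (z * E) = Kᴴ * ((zᴴ * z) * E) by simp only [Matrix.mul_assoc]]
          rw [hz, Matrix.one_mul]
          exact skew_herm_re_trace hK hEherm
        have hSne : {t : ℝ | ∃ w : Matrix (Fin n) (Fin r) ℂ,
            (∀ K : Matrix (Fin r) (Fin r) ℂ, Kᴴ = -K →
              (Matrix.trace ((z * K)ᴴ * w)).re = 0) ∧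
            frob w = 1 ∧ t = ∑ j, rinner (z * wᴴ + w * zᴴ) (A j) ^ 2}.Nonempty :=
          ⟨_, z * E, hhoriz, hfzE, rfl⟩
        apply le_csInf hSne
        rintro s ⟨w, hwhoriz, hwfrob, rfl⟩
        have := upper_of_witness A z w hz hwhoriz hwfrob
        linarith
      linarith
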